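/- Asymptotic expansion of the inverse map: let ψ₁ be the inverse of φ(z) = (cosh(πz)+1)/2, mapping ℍ to the strip S = {0 < Re z, 0 < Im z < 1}. Then |ψ₁'(z)| = π^{-1}|z−1|^{-1/2} + o(|z−1|^{-1/2}) as z → 1 in ℍ. -/

import Mathlib

open Complex Filter Set

/-- Asymptotics of the inverse map: if `ψ₁` is the inverse of
`φ(z) = (cosh(πz)+1)/2 : S → ℍ`, then
`|ψ₁'(z)| = π⁻¹|z−1|^{-1/2} + o(|z−1|^{-1/2})` as `z → 1` in `ℍ`, i.e.
`|ψ₁'(z)| · |z−1|^{1/2} → 1/π`. -/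
theorem inverse_map_asymptotics (ψ₁ : ℂ → ℂ)
    (S : Set ℂ) (hS : S = {z | 0 < z.re ∧ 0 < z.im ∧ z.im < 1})
    (H : Set ℂ) (hH : H = {z | 0 < z.im})
    (hleft : ∀ z ∈ S, ψ₁ ((Complex.cosh (Real.pi * z) + 1) / 2) = z)
    (hright : ∀ z ∈ H, (Complex.cosh (Real.pi * ψ₁ z) + 1) / 2 = z ∧ ψ₁ z ∈ S)
    (hdiff : DifferentiableOn ℂ ψ₁ H) :
    Tendsto (fun z => ‖deriv ψ₁ z‖ * ‖z - 1‖ ^ ((1:ℝ)/2))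
      (nhdsWithin 1 H) (nhds (1 / Real.pi)) := by
  have hπ : (Real.pi : ℂ) ≠ 0 := by exact_mod_cast Real.pi_ne_zero
  have hOpen : IsOpen H := by
    rw [hH]; exact isOpen_lt continuous_const Complex.continuous_im
  have heq : ∀ z ∈ H, ‖deriv ψ₁ z‖ * ‖z - 1‖ ^ ((1:ℝ)/2)
      = (Real.pi * Real.sqrt (‖z‖))⁻¹ := by
    intro z hz
    have him : 0 < z.im := by rw [hH] at hz; exact hz
    have hz1 : z ≠ 1 := by intro h; rw [h] at him; simp at him
    have hz0 : z ≠ 0 := by intro h; rw [h] at him; simp at him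
    obtain ⟨hrz, -⟩ := hright z hz
    have hcosh : Complex.cosh (Real.pi * ψ₁ z) = 2*z - 1 := by
      linear_combination 2 * hrz
    set d := deriv ψ₁ z with hdef
    have hψ : HasDerivAt ψ₁ d z :=
      (hdiff.differentiableAt (hOpen.mem_nhds hz)).hasDerivAt
    have hF : HasDerivAt (fun w => (Complex.cosh ((Real.pi:ℂ) * ψ₁ w) + 1)/2)
        (Complex.sinh ((Real.pi:ℂ) * ψ₁ z) * ((Real.pi:ℂ) * d) / 2) z :=
      (((Complex.hasDerivAt_cosh _).comp z (hψ.const_mul _)).add_const 1).div_const 2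
    have hid : HasDerivAt (fun w : ℂ => w)
        (Complex.sinh ((Real.pi:ℂ) * ψ₁ z) * ((Real.pi:ℂ) * d) / 2) z := by
      apply hF.congr_of_eventuallyEq
      filter_upwards [hOpen.mem_nhds hz] with w hw
      exact ((hright w hw).1).symm
    have hone : Complex.sinh ((Real.pi:ℂ) * ψ₁ z) * ((Real.pi:ℂ) * d) / 2 = 1 :=
      hid.unique (hasDerivAt_id z)
    set s := Complex.sinh ((Real.pi:ℂ) * ψ₁ z) with hsdef
    have hA : Complex.cosh ((Real.pi:ℂ) * ψ₁ z) ^ 2 - s ^ 2 = 1 :=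
      Complex.cosh_sq_sub_sinh_sq _
    have hs2 : s ^ 2 = 4*z*(z-1) := by
      linear_combination (Complex.cosh ((Real.pi:ℂ) * ψ₁ z) + 2*z - 1) * hcosh - hA
    have hsne : s ≠ 0 := by
      intro h
      have h4 : (4:ℂ)*z*(z-1) = 0 := by rw [← hs2, h]; ring
      simp [mul_eq_zero, hz0, sub_eq_zero, hz1] at h4
    have hd : d = 2/((Real.pi:ℂ) * s) := by
      field_simp at hone ⊢
      linear_combination hone
    have habsz : 0 < ‖z‖ := norm_pos_iff.mpr hz0
    have habsz1 : 0 < ‖z - 1‖ := norm_pos_iff.mpr (sub_ne_zero.mpr hz1)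
    have h2 : (‖s‖)^2 = 4 * ‖z‖ * ‖z-1‖ := by
      rw [← norm_pow, hs2, norm_mul, norm_mul]
      norm_num
    have habs_s : ‖s‖
        = 2 * Real.sqrt (‖z‖) * Real.sqrt (‖z-1‖) := by
      calc ‖s‖ = Real.sqrt ((‖s‖)^2) :=
            (Real.sqrt_sq (norm_nonneg s)).symm
        _ = Real.sqrt (4 * ‖z‖ * ‖z-1‖) := by rw [h2]
        _ = 2 * Real.sqrt (‖z‖) * Real.sqrt (‖z-1‖) := by
            rw [Real.sqrt_mul (by positivity), Real.sqrt_mul (by norm_num : (0:ℝ) ≤ 4),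
              show (4:ℝ) = 2^2 by norm_num, Real.sqrt_sq (by norm_num : (0:ℝ) ≤ 2)]
    have hsq1 : Real.sqrt (‖z‖) ≠ 0 := by positivity
    have hsq2 : Real.sqrt (‖z-1‖) ≠ 0 := by positivity
    rw [hd, norm_div, norm_mul, ← Real.sqrt_eq_rpow, habs_s]
    simp only [Complex.norm_real, Real.norm_eq_abs, Complex.norm_two, abs_of_pos Real.pi_pos]
    field_simp
  have hcont : Tendsto (fun z : ℂ => (Real.pi * Real.sqrt (‖z‖))⁻¹)
      (nhdsWithin 1 H) (nhds (1/Real.pi)) := by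
    have hc : ContinuousAt (fun z : ℂ => (Real.pi * Real.sqrt (‖z‖))⁻¹) 1 := by
      apply ContinuousAt.inv₀
      · exact continuousAt_const.mul
          ((Real.continuous_sqrt.comp continuous_norm).continuousAt)
      · simp [Real.pi_ne_zero]
    rw [one_div]
    simpa using hc.tendsto.mono_left (nhdsWithin_le_nhds (s := H))
  refine hcont.congr' ?_
  filter_upwards [self_mem_nhdsWithin] with z hz
  exact (heq z hz).symm
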